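/- For every integer n ≥ 2, the polynomial p_n(x) = x^{2n} - 2(x + x^2 + ... + x^{2n-1}) + 1 has no root that is a root of unity. -/
import Mathlib

open Polynomial

lemma paux {R : Type*} [CommRing R] (n : ℕ) (hn : 2 ≤ n) (x : R) :
    aeval x ((X ^ (2 * n) - 2 * ∑ j ∈ Finset.Icc 1 (2 * n - 1), X ^ j + 1 : ℤ[X]))
      = x ^ (2 * n) + 3 - 2 * ∑ j ∈ Finset.range (2 * n), x ^ j := by
  have h1 : ∑ j ∈ Finset.range (2 * n), x ^ j
      = 1 + ∑ j ∈ Finset.Icc 1 (2 * n - 1), x ^ j := by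
    have h2 : Finset.Icc 1 (2 * n - 1) = Finset.Ico 1 (2 * n) := by
      rw [← Finset.Ico_add_one_right_eq_Icc]; congr 1; omega
    rw [h2, Finset.range_eq_Ico, Finset.sum_eq_sum_Ico_succ_bot (by omega)]
    simp
  simp only [map_add, map_sub, map_mul, map_sum, map_pow, aeval_X, map_ofNat, map_one]
  rw [h1]
  ring

theorem no_root_of_unity (n : ℕ) (hn : 2 ≤ n) (z : ℂ)
    (hz : ∃ m : ℕ, 0 < m ∧ z ^ m = 1) :
    aeval z ((X ^ (2 * n) - 2 * ∑ j ∈ Finset.Icc 1 (2 * n - 1), X ^ j + 1 : ℤ[X])) ≠ 0 := by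
  intro h0
  obtain ⟨m, hm, hzm⟩ := hz
  have hfin : IsOfFinOrder z := isOfFinOrder_iff_pow_eq_one.2 ⟨m, hm, hzm⟩
  have hkpos : 0 < orderOf z := hfin.orderOf_pos
  have hprim : IsPrimitiveRoot z (orderOf z) := IsPrimitiveRoot.orderOf z
  have key := paux n hn z
  rw [h0] at key
  rcases lt_or_ge (orderOf z) 3 with hk3 | hk3
  · interval_cases h : orderOf z
    · -- orderOf z = 1, i.e. z = 1
      have hz1 : z = 1 := orderOf_eq_one_iff.mp h
      rw [hz1] at key
      simp only [one_pow, Finset.sum_const, Finset.card_range, nsmul_eq_mul, mul_one] at key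
      have hc : (n : ℂ) = 1 := by push_cast at key; linear_combination key / 4
      have : n = 1 := by exact_mod_cast hc
      omega
    · -- orderOf z = 2, i.e. z = -1
      have hz2 : z * z = 1 := by
        have := pow_orderOf_eq_one z; rw [h] at this; rwa [sq] at this
      have hz1 : z ≠ 1 := by
        intro hz1; rw [orderOf_eq_one_iff.mpr hz1] at h; omega
      have hzneg : z = -1 := (mul_self_eq_one_iff.mp hz2).resolve_left hz1
      rw [hzneg] at key
      rw [neg_one_geom_sum, if_pos (even_two_mul n), pow_mul, neg_one_sq, one_pow] at key
      norm_num at key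
  · -- orderOf z ≥ 3
    have hint : IsIntegral ℤ z := hprim.isIntegral hkpos
    have hmin : cyclotomic (orderOf z) ℤ = minpoly ℤ z :=
      cyclotomic_eq_minpoly hprim hkpos
    have hdvd : cyclotomic (orderOf z) ℤ ∣
        (X ^ (2 * n) - 2 * ∑ j ∈ Finset.Icc 1 (2 * n - 1), X ^ j + 1 : ℤ[X]) := by
      rw [hmin]; exact minpoly.isIntegrallyClosed_dvd hint h0
    have hdvd3 : (cyclotomic (orderOf z) ℤ).eval 3 ∣
        ((X ^ (2 * n) - 2 * ∑ j ∈ Finset.Icc 1 (2 * n - 1), X ^ j + 1 : ℤ[X])).eval 3 :=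
      eval_dvd hdvd
    have hval : ((X ^ (2 * n) - 2 * ∑ j ∈ Finset.Icc 1 (2 * n - 1), X ^ j + 1 : ℤ[X])).eval 3
        = 4 := by
      have h1 := paux (R := ℤ) n hn 3
      simp only [aeval_def, eval₂_eq_eval_map, Algebra.algebraMap_self, Polynomial.map_id] at h1
      have h2 := geom_sum_mul (3 : ℤ) (2 * n)
      rw [h1]; linarith
    rw [hval] at hdvd3
    -- lower bound
    have hgt : (4 : ℝ) < (((cyclotomic (orderOf z) ℤ).eval 3 : ℤ) : ℝ) := by
      have hb := sub_one_pow_totient_lt_cyclotomic_eval (n := orderOf z) (q := (3 : ℝ)) (by omega : 2 ≤ orderOf z)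
        (by norm_num)
      have htot : 2 ≤ (orderOf z).totient := by
        have he : Even (orderOf z).totient := Nat.totient_even (by omega)
        have hp : 0 < (orderOf z).totient := Nat.totient_pos.mpr hkpos
        rcases he with ⟨t, ht⟩; omega
      have h4 : (4 : ℝ) ≤ ((3 : ℝ) - 1) ^ (orderOf z).totient := by
        calc (4 : ℝ) = 2 ^ 2 := by norm_num
        _ ≤ 2 ^ (orderOf z).totient := by
            exact pow_le_pow_right₀ (by norm_num) htot
        _ = ((3 : ℝ) - 1) ^ (orderOf z).totient := by norm_num
      have heq : (cyclotomic (orderOf z) ℝ).eval 3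
          = (((cyclotomic (orderOf z) ℤ).eval 3 : ℤ) : ℝ) := by
        rw [← map_cyclotomic_int (orderOf z) ℝ,
          show ((3 : ℝ)) = ((3 : ℤ) : ℝ) from by norm_num, eval_intCast_map]
        norm_num
      rw [heq] at hb
      linarith
    have hle : ((cyclotomic (orderOf z) ℤ).eval 3) ≤ 4 :=
      Int.le_of_dvd (by norm_num) hdvd3
    have : (((cyclotomic (orderOf z) ℤ).eval 3 : ℤ) : ℝ) ≤ 4 := by exact_mod_cast hle
    linarith
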